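/- Let h : ℂ → ℂ be a nonzero entire function of exponential type, i.e., there exist constants C ≥ 0 and τ ≥ 0 with |h(z)| ≤ C·e^{τ|z|} for all z ∈ ℂ. If the zero set of h is finite, then there exist a polynomial P with complex coefficients and λ ∈ ℂ such that h(z) = P(z)·e^{λz} for all z ∈ ℂ. -/

import Mathlib

set_option maxHeartbeats 1000000

open Complex Metric



lemma entire_deriv {u : ℂ → ℂ} (hu : Differentiable ℂ u) : Differentiable ℂ (deriv u) := by
  have hA : AnalyticOnNhd ℂ u Set.univ := fun z _ => hu.analyticAt z
  exact fun z => ((hA.deriv) z trivial).differentiableAt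

lemma entire_primitive {u : ℂ → ℂ} (hu : Differentiable ℂ u) :
    ∃ F : ℂ → ℂ, (∀ z, HasDerivAt F (u z) z) ∧ F 0 = 0 := by
  have hu' : Differentiable ℂ (deriv u) := entire_deriv hu
  have hcu : Continuous u := hu.continuous
  have hcu' : Continuous (deriv u) := hu'.continuous
  refine ⟨fun z => ∫ t in (0:ℝ)..1, z * u (t * z), fun x₀ => ?_, by simp⟩
  set F' : ℂ → ℝ → ℂ := fun x t => u (t * x) + x * (t * deriv u (t * x)) with hF'
  -- bound on the compact set
  have c1 : Continuous (fun p : ℝ × ℂ => (p.1 : ℂ) * p.2) :=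
    (continuous_ofReal.comp continuous_fst).mul continuous_snd
  have hcont2 : Continuous (fun p : ℝ × ℂ => u (p.1 * p.2) + p.2 * (p.1 * deriv u (p.1 * p.2))) :=
    (hcu.comp c1).add (continuous_snd.mul
      (((continuous_ofReal.comp continuous_fst)).mul (hcu'.comp c1)))
  obtain ⟨C, hC⟩ := (IsCompact.exists_bound_of_continuousOn
      ((isCompact_Icc (a := (0:ℝ)) (b := 1)).prod (isCompact_closedBall x₀ 1))
      hcont2.continuousOn)
  have key := intervalIntegral.hasDerivAt_integral_of_dominated_loc_of_deriv_le
    (F := fun x t => x * u (t * x)) (F' := F') (x₀ := x₀) (a := 0) (b := 1)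
    (bound := fun _ => C) (μ := MeasureTheory.volume) (s := ball x₀ 1) (ball_mem_nhds x₀ one_pos)
    (Filter.Eventually.of_forall (fun x =>
      (Continuous.aestronglyMeasurable
        (continuous_const.mul (hcu.comp (continuous_ofReal.mul continuous_const))))))
    ((Continuous.intervalIntegrable
      (continuous_const.mul (hcu.comp (continuous_ofReal.mul continuous_const))) 0 1))
    ((Continuous.aestronglyMeasurable
      ((hcu.comp (continuous_ofReal.mul continuous_const)).add
        (continuous_const.mul (continuous_ofReal.mul
          (hcu'.comp (continuous_ofReal.mul continuous_const)))))))
    (MeasureTheory.ae_of_all _ (fun t ht x hx => by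
      have ht' : t ∈ Set.Icc (0:ℝ) 1 := by
        rw [Set.uIoc_of_le zero_le_one] at ht
        exact ⟨ht.1.le, ht.2⟩
      exact hC (t, x) ⟨ht', ball_subset_closedBall (by simpa using hx)⟩))
    (intervalIntegrable_const)
    (MeasureTheory.ae_of_all _ (fun t ht x hx => by
      have hin : HasDerivAt (fun y : ℂ => (t:ℂ) * y) (t:ℂ) x := by
        simpa using (hasDerivAt_id x).const_mul (t:ℂ)
      have h1 : HasDerivAt (fun y : ℂ => u ((t:ℂ) * y)) (deriv u ((t:ℂ) * x) * (t:ℂ)) x :=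
        HasDerivAt.comp x (hu ((t:ℂ) * x)).hasDerivAt hin
      have h2 := (hasDerivAt_id x).mul h1
      have : F' x t = 1 * u ((t:ℂ) * x) + x * (deriv u ((t:ℂ) * x) * (t:ℂ)) := by
        simp only [hF']; ring
      rw [this]
      exact h2))
  have hint : (∫ t in (0:ℝ)..1, F' x₀ t) = u x₀ := by
    have hG : ∀ t ∈ Set.uIcc (0:ℝ) 1,
        HasDerivAt (fun s : ℝ => (s : ℂ) * u (s * x₀)) (F' x₀ t) t := by
      intro t _
      have : HasDerivAt (fun z : ℂ => z * u (z * x₀))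
          (u ((t:ℂ) * x₀) + (t:ℂ) * (x₀ * deriv u ((t:ℂ) * x₀))) (t:ℂ) := by
        have hin2 : HasDerivAt (fun z : ℂ => z * x₀) x₀ (t:ℂ) := by
          simpa using (hasDerivAt_id (t:ℂ)).mul_const x₀
        have h1 : HasDerivAt (fun z : ℂ => u (z * x₀)) (deriv u ((t:ℂ) * x₀) * x₀) (t:ℂ) :=
          HasDerivAt.comp (t:ℂ) (hu ((t:ℂ) * x₀)).hasDerivAt hin2
        have h2 := (hasDerivAt_id (t:ℂ)).mul h1
        have he : u ((t:ℂ) * x₀) + (t:ℂ) * (x₀ * deriv u ((t:ℂ) * x₀))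
            = 1 * u ((t:ℂ) * x₀) + (t:ℂ) * (deriv u ((t:ℂ) * x₀) * x₀) := by ring
        rw [he]
        exact h2
      have h3 := this.comp_ofReal
      have he2 : F' x₀ t = u ((t:ℂ) * x₀) + (t:ℂ) * (x₀ * deriv u ((t:ℂ) * x₀)) := by
        simp only [hF']; ring
      rw [he2]
      exact h3
    have := intervalIntegral.integral_eq_sub_of_hasDerivAt hG
      ((Continuous.intervalIntegrable
        ((hcu.comp (continuous_ofReal.mul continuous_const)).add
          (continuous_const.mul (continuous_ofReal.mul
            (hcu'.comp (continuous_ofReal.mul continuous_const))))) 0 1))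
    simpa [F'] using this
  rw [← hint]
  exact key.2


lemma entire_exp_log {g : ℂ → ℂ} (hg : Differentiable ℂ g) (h0 : ∀ z, g z ≠ 0) :
    ∃ f : ℂ → ℂ, Differentiable ℂ f ∧ ∀ z, g z = Complex.exp (f z) := by
  have hu : Differentiable ℂ (fun z => deriv g z / g z) := (entire_deriv hg).div hg h0
  obtain ⟨F, hF, hF0⟩ := entire_primitive hu
  set f : ℂ → ℂ := fun z => F z + Complex.log (g 0) with hf
  have hFd : Differentiable ℂ F := fun z => (hF z).differentiableAt
  have hfd : Differentiable ℂ f := hFd.add_const _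
  refine ⟨f, hfd, ?_⟩
  have key : ∀ z, g z * Complex.exp (-f z) = 1 := by
    have hconst : ∀ z, g z * Complex.exp (-f z) = g 0 * Complex.exp (-f 0) := by
      intro z
      have hder : ∀ w, deriv (fun z => g z * Complex.exp (-f z)) w = 0 := by
        intro w
        have h0' : HasDerivAt f (deriv g w / g w) w := (hF w).add_const _
        have h1 : HasDerivAt (fun z => -f z) (-(deriv g w / g w)) w := h0'.neg
        have h2 : HasDerivAt (fun z => Complex.exp (-f z))
            (Complex.exp (-f w) * (-(deriv g w / g w))) w := h1.cexp
        have h3 : HasDerivAt (fun z => g z * Complex.exp (-f z))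
            (deriv g w * Complex.exp (-f w) + g w * (Complex.exp (-f w) * (-(deriv g w / g w)))) w :=
          (hg w).hasDerivAt.mul h2
        rw [h3.deriv]
        field_simp [h0 w]
        ring
      exact is_const_of_deriv_eq_zero ((hg.mul ((hfd.neg).cexp))) hder z 0
    intro z
    rw [hconst z, hf]
    simp only [hF0]
    rw [show -((0:ℂ) + Complex.log (g 0)) = -Complex.log (g 0) by ring, Complex.exp_neg,
      Complex.exp_log (h0 0)]
    field_simp [h0 0]
  intro z
  have h2 : g z * (Complex.exp (-f z) * Complex.exp (f z)) = Complex.exp (f z) := by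
    rw [← mul_assoc, key z, one_mul]
  rwa [← Complex.exp_add, neg_add_cancel, Complex.exp_zero, mul_one] at h2

lemma entire_affine_of_re_le {f : ℂ → ℂ} (hf : Differentiable ℂ f) {A B : ℝ}
    (hB : 0 ≤ B) (hbound : ∀ z, (f z).re ≤ A + B * ‖z‖) :
    ∀ z, f z = f 0 + deriv f 0 * z := by
  -- Step 1: linear growth of ‖f‖
  have hA0 : (f 0).re ≤ A := by simpa using hbound 0
  have growth : ∀ z : ℂ, ‖f z‖ ≤ (‖f 0‖ + 2*(A - (f 0).re + 1)) + (4*B) * ‖z‖ := by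
    intro z
    rcases eq_or_ne z 0 with rfl | hz0
    · simp; nlinarith
    set R : ℝ := 2 * ‖z‖ with hR
    have hzpos : 0 < ‖z‖ := norm_pos_iff.mpr hz0
    have hRpos : 0 < R := by positivity
    set M : ℝ := A + B * R - (f 0).re + 1 with hM
    have hMpos : 0 < M := by nlinarith
    set F : ℂ → ℂ := fun w => f w - f 0 with hFdef
    have hrebound : ∀ w ∈ ball (0:ℂ) R, (F w).re ≤ M - 1 := by
      intro w hw
      have : ‖w‖ < R := by simpa using hw
      have := hbound w
      simp only [hFdef, Complex.sub_re]
      nlinarith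
    have hden : ∀ w ∈ ball (0:ℂ) R, (2*(M:ℂ) - F w) ≠ 0 := by
      intro w hw hcontra
      have h1 : (2*(M:ℂ) - F w).re = 2*M - (F w).re := by simp
      rw [hcontra] at h1
      have := hrebound w hw
      simp at h1
      nlinarith
    set φ : ℂ → ℂ := fun w => F w / (2*(M:ℂ) - F w) with hφdef
    have hφdiff : DifferentiableOn ℂ φ (ball (0:ℂ) R) := by
      apply DifferentiableOn.div
      · exact ((hf.sub_const (f 0)).differentiableOn)
      · exact ((differentiable_const _).sub (hf.sub_const (f 0))).differentiableOn
      · exact hden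
    have hφ0 : φ 0 = 0 := by simp [hφdef, hFdef]
    have hmaps : Set.MapsTo φ (ball (0:ℂ) R) (ball (φ 0) 1) := by
      intro w hw
      rw [hφ0, mem_ball_zero_iff]
      rw [norm_div]
      rw [div_lt_one (norm_pos_iff.mpr (hden w hw))]
      have hsq : ‖F w‖^2 < ‖2*(M:ℂ) - F w‖^2 := by
        have h1 : ‖F w‖^2 = Complex.normSq (F w) := by
          rw [Complex.sq_norm]
        have h2 : ‖2*(M:ℂ) - F w‖^2 = Complex.normSq (2*(M:ℂ) - F w) := by
          rw [Complex.sq_norm]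
        rw [h1, h2]
        have e1 : Complex.normSq (2*(M:ℂ) - F w) =
            4*M^2 - 4*M*(F w).re + Complex.normSq (F w) := by
          simp only [Complex.normSq_apply, Complex.sub_re, Complex.sub_im, Complex.mul_re,
            Complex.mul_im, Complex.ofReal_re, Complex.ofReal_im, Complex.re_ofNat,
            Complex.im_ofNat]
          ring
        rw [e1]
        have := hrebound w hw
        nlinarith
      nlinarith [norm_nonneg (F w), norm_nonneg (2*(M:ℂ) - F w), hsq]
    have hz_in : z ∈ ball (0:ℂ) R := by
      simp only [mem_ball_zero_iff]
      nlinarith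
    have hschwarz := Complex.dist_le_div_mul_dist_of_mapsTo_ball hφdiff (hmaps.mono_right ball_subset_closedBall) hz_in
    rw [hφ0] at hschwarz
    simp only [dist_zero_right, dist_eq_norm, sub_zero] at hschwarz
    have hφz : ‖φ z‖ ≤ 1/2 := by
      have h5 : 1/R * ‖z‖ = 1/2 := by
        rw [hR, div_mul_eq_mul_div, one_mul, mul_comm 2 ‖z‖, ← div_div,
          div_self (ne_of_gt hzpos)]
      exact hschwarz.trans (le_of_eq h5)
    -- recover bound on F z
    have hFz : F z * (1 + φ z) = 2*(M:ℂ) * φ z := by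
      have hd := hden z hz_in
      simp only [hφdef]
      field_simp [hφdef]
      ring
    have h1φ : (1:ℝ)/2 ≤ ‖1 + φ z‖ := by
      have h6 := norm_sub_le (1 + φ z) (φ z)
      rw [add_sub_cancel_right, norm_one] at h6
      linarith
    have hnorm : ‖F z‖ * ‖1 + φ z‖ ≤ M := by
      rw [← norm_mul, hFz, norm_mul]
      have : ‖(2*(M:ℂ))‖ = 2*M := by
        simp [Complex.norm_real]
        exact hMpos.le
      rw [this]
      nlinarith [norm_nonneg (φ z)]
    have hFzb : ‖F z‖ ≤ 2*M := by
      nlinarith [norm_nonneg (F z)]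
    have : ‖f z‖ ≤ ‖f 0‖ + ‖F z‖ := by
      have : f z = f 0 + F z := by simp [hFdef]
      rw [this]; exact norm_add_le _ _
    rw [hM, hR] at hFzb
    nlinarith
  -- Step 2: deriv f is bounded
  set C₁ : ℝ := ‖f 0‖ + 2*(A - (f 0).re + 1) with hC₁
  set C₂ : ℝ := 4*B with hC₂
  have hC₁0 : 0 ≤ C₁ := by
    have := norm_nonneg (f 0)
    have h2 : (f 0).re ≤ ‖f 0‖ := Complex.re_le_norm (f 0)
    nlinarith
  have hC₂0 : 0 ≤ C₂ := by positivity
  have hderiv_bdd : ∀ c : ℂ, ‖deriv f c‖ ≤ C₂ + 1 := by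
    intro c
    set R : ℝ := max 1 (C₁ + C₂ * ‖c‖) with hRdef
    have hR1 : (1:ℝ) ≤ R := le_max_left _ _
    have hR2 : C₁ + C₂ * ‖c‖ ≤ R := le_max_right _ _
    have hRpos : 0 < R := lt_of_lt_of_le one_pos hR1
    have hb : ∀ w ∈ sphere c R, ‖f w‖ ≤ C₁ + C₂*(‖c‖ + R) := by
      intro w hw
      have hw' : ‖w‖ ≤ ‖c‖ + R := by
        have : dist w c = R := by simpa [dist_eq_norm] using hw
        calc ‖w‖ = ‖c + (w - c)‖ := by ring_nf
        _ ≤ ‖c‖ + ‖w - c‖ := norm_add_le _ _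
        _ = ‖c‖ + R := by rw [← dist_eq_norm w c, this]
      calc ‖f w‖ ≤ C₁ + C₂ * ‖w‖ := growth w
      _ ≤ C₁ + C₂*(‖c‖ + R) := by nlinarith
    have := Complex.norm_deriv_le_of_forall_mem_sphere_norm_le hRpos
      (hf.diffContOnCl) hb
    calc ‖deriv f c‖ ≤ (C₁ + C₂*(‖c‖ + R))/R := this
    _ ≤ C₂ + 1 := by
      rw [div_le_iff₀ hRpos]
      nlinarith
  -- Step 3: Liouville
  have hd : Differentiable ℂ (deriv f) := entire_deriv hf
  have hbdd : Bornology.IsBounded (Set.range (deriv f)) := by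
    rw [Metric.isBounded_iff_subset_closedBall 0]
    exact ⟨C₂ + 1, by rintro x ⟨c, rfl⟩; simpa using hderiv_bdd c⟩
  have hconst : ∀ c, deriv f c = deriv f 0 := fun c => hd.apply_eq_apply_of_bounded hbdd c 0
  -- Step 4: conclude affine
  intro z
  have hψ : ∀ w, deriv (fun z => f z - (f 0 + deriv f 0 * z)) w = 0 := by
    intro w
    have h1 : HasDerivAt (fun z => f z - (f 0 + deriv f 0 * z)) (deriv f w - deriv f 0) w := by
      have := ((hf w).hasDerivAt).sub (((hasDerivAt_id w).const_mul (deriv f 0)).const_add (f 0))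
      simp only [mul_one] at this
      exact this
    rw [h1.deriv, hconst w, sub_self]
  have h9 := is_const_of_deriv_eq_zero (f := fun z => f z - (f 0 + deriv f 0 * z))
    (by
      apply Differentiable.sub hf
      apply Differentiable.add (differentiable_const _)
      exact differentiable_id.const_mul _) hψ z 0
  have h10 : f z - (f 0 + deriv f 0 * z) = 0 := by
    rw [h9]; ring
  exact sub_eq_zero.mp h10


lemma iterate_dslope_entire {f : ℂ → ℂ} (z₀ : ℂ) (hf : Differentiable ℂ f) (n : ℕ) :
    Differentiable ℂ ((Function.swap dslope z₀)^[n] f) := by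
  induction n generalizing f with
  | zero => exact hf
  | succ n ih =>
    rw [Function.iterate_succ_apply]
    apply ih
    have : DifferentiableOn ℂ (dslope f z₀) Set.univ :=
      (Complex.differentiableOn_dslope (Filter.univ_mem)).mpr hf.differentiableOn
    rw [← differentiableOn_univ]
    exact this

lemma entire_ne_zero_of_ne {h : ℂ → ℂ} (hd : Differentiable ℂ h) (hne : h ≠ 0) (z₀ : ℂ) :
    ¬ (∀ᶠ z in nhds z₀, h z = 0) := by
  intro hev
  apply hne
  funext w
  have hA : AnalyticOnNhd ℂ h Set.univ := fun z _ => hd.analyticAt z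
  have := hA.eqOn_zero_of_preconnected_of_eventuallyEq_zero isPreconnected_univ
    (Set.mem_univ z₀) hev (Set.mem_univ w)
  simpa using this

lemma entire_factor : ∀ (n : ℕ) (h : ℂ → ℂ), Differentiable ℂ h → h ≠ 0 →
    ∀ (hz : {z : ℂ | h z = 0}.Finite), hz.toFinset.card ≤ n →
    ∃ (s : Multiset ℂ) (g : ℂ → ℂ), Differentiable ℂ g ∧ (∀ z, g z ≠ 0) ∧
      ∀ z, h z = (s.map (fun ρ => z - ρ)).prod * g z := by
  intro n
  induction n with
  | zero =>
    intro h hd hne hz hcard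
    refine ⟨0, h, hd, ?_, by simp⟩
    intro z hz0
    have : z ∈ hz.toFinset := by simp [hz0]
    rw [Finset.card_eq_zero.mp (le_antisymm hcard (Nat.zero_le _))] at this
    simp at this
  | succ n ih =>
    intro h hd hne hz hcard
    by_cases hempty : {z : ℂ | h z = 0} = ∅
    · refine ⟨0, h, hd, ?_, by simp⟩
      intro z hz0
      have : z ∈ {z : ℂ | h z = 0} := hz0
      rw [hempty] at this
      exact this
    · obtain ⟨z₀, hz₀⟩ := Set.nonempty_iff_ne_empty.mpr hempty
      obtain ⟨p, hp⟩ := hd.analyticAt z₀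
      have hpne : p ≠ 0 := by
        intro hp0
        exact entire_ne_zero_of_ne hd hne z₀ (hp.locally_zero_iff.mpr hp0)
      set m := p.order with hm
      set h₁ := (Function.swap dslope z₀)^[m] h with hh₁
      have hh₁d : Differentiable ℂ h₁ := iterate_dslope_entire z₀ hd m
      have hh₁z₀ : h₁ z₀ ≠ 0 := hp.iterate_dslope_fslope_ne_zero hpne
      -- global factorization via identity theorem
      have hglob : ∀ z, h z = (z - z₀)^m * h₁ z := by
        have hev : h =ᶠ[nhds z₀] (fun z => (z - z₀)^m * h₁ z) := by
          filter_upwards [Filter.Eventually.of_forall hp.eq_pow_order_mul_iterate_dslope] with z hz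
          simpa [smul_eq_mul] using hz
        have hA1 : AnalyticOnNhd ℂ h Set.univ := fun z _ => hd.analyticAt z
        have hA2 : AnalyticOnNhd ℂ (fun z => (z - z₀)^m * h₁ z) Set.univ := fun z _ =>
          ((((differentiable_id.sub_const z₀).pow m).mul hh₁d).analyticAt z)
        have := hA1.eq_of_eventuallyEq hA2 hev
        exact fun z => congrFun this z
      -- zeros of h₁
      have hz₁sub : {z : ℂ | h₁ z = 0} ⊆ {z : ℂ | h z = 0} \ {z₀} := by
        intro w hw
        refine ⟨?_, ?_⟩
        · show h w = 0
          rw [hglob w, hw]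
          simp [Set.mem_setOf_eq] at hw ⊢
        · intro hwz
          simp only [Set.mem_singleton_iff] at hwz
          rw [hwz] at hw
          exact hh₁z₀ hw
      have hz₁ : {z : ℂ | h₁ z = 0}.Finite := (hz.diff).subset hz₁sub
      have hcard₁ : hz₁.toFinset.card ≤ n := by
        have hsub : hz₁.toFinset ⊆ hz.toFinset.erase z₀ := by
          intro w hw
          rw [Set.Finite.mem_toFinset] at hw
          have := hz₁sub hw
          rw [Finset.mem_erase, Set.Finite.mem_toFinset]
          exact ⟨fun hc => this.2 (by simp [hc]), this.1⟩
        calc hz₁.toFinset.card ≤ (hz.toFinset.erase z₀).card := Finset.card_le_card hsub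
        _ = hz.toFinset.card - 1 := Finset.card_erase_of_mem (by
            rw [Set.Finite.mem_toFinset]; exact hz₀)
        _ ≤ n := by omega
      have hh₁ne : h₁ ≠ 0 := by
        intro hc
        rw [hc] at hh₁z₀
        exact hh₁z₀ rfl
      obtain ⟨s₁, g, hgd, hgne, hfac⟩ := ih h₁ hh₁d hh₁ne hz₁ hcard₁
      refine ⟨Multiset.replicate m z₀ + s₁, g, hgd, hgne, ?_⟩
      intro z
      rw [hglob z, hfac z]
      rw [Multiset.map_add, Multiset.prod_add, Multiset.map_replicate, Multiset.prod_replicate]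
      ring


lemma norm_multiset_prod' (s : Multiset ℂ) : ‖s.prod‖ = (s.map (fun x => ‖x‖)).prod := by
  induction s using Multiset.induction_on with
  | empty => simp
  | cons a t ih => simp [norm_mul, ih]

lemma one_le_multiset_prod' (t : Multiset ℝ) (h : ∀ x ∈ t, 1 ≤ x) : 1 ≤ t.prod := by
  induction t using Multiset.induction_on with
  | empty => simp
  | cons a t ih =>
    rw [Multiset.prod_cons]
    have h1 := h a (Multiset.mem_cons_self a t)
    have h2 := ih (fun x hx => h x (Multiset.mem_cons_of_mem hx))
    nlinarith

theorem exp_type_finite_zeros_eq_poly_mul_exp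
    (h : ℂ → ℂ) (hdiff : Differentiable ℂ h) (hne : h ≠ 0)
    (htype : ∃ C τ : ℝ, 0 ≤ C ∧ 0 ≤ τ ∧ ∀ z : ℂ, ‖h z‖ ≤ C * Real.exp (τ * ‖z‖))
    (hzeros : {z : ℂ | h z = 0}.Finite) :
    ∃ (P : Polynomial ℂ) (lam : ℂ), ∀ z : ℂ, h z = P.eval z * Complex.exp (lam * z) := by
  obtain ⟨C, τ, hC, hτ, hb⟩ := htype
  obtain ⟨s, g, hgd, hgne, hfac⟩ :=
    entire_factor hzeros.toFinset.card h hdiff hne hzeros le_rfl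
  obtain ⟨f, hfd, hgf⟩ := entire_exp_log hgd hgne
  -- growth bound for g
  set R₀ : ℝ := (s.map (fun x => ‖x‖)).sum + 1 with hR₀
  have hsumnn : 0 ≤ (s.map (fun x => ‖x‖)).sum := by
    apply Multiset.sum_nonneg
    intro x hx
    obtain ⟨ρ, _, rfl⟩ := Multiset.mem_map.mp hx
    exact norm_nonneg ρ
  have hR₀1 : 1 ≤ R₀ := by rw [hR₀]; linarith
  have hprod_ge : ∀ z : ℂ, R₀ ≤ ‖z‖ → 1 ≤ ‖(s.map (fun ρ => z - ρ)).prod‖ := by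
    intro z hz
    rw [norm_multiset_prod', Multiset.map_map]
    apply one_le_multiset_prod'
    intro x hx
    obtain ⟨ρ, hρ, rfl⟩ := Multiset.mem_map.mp hx
    have hρn : ‖ρ‖ ≤ (s.map (fun x => ‖x‖)).sum := by
      apply Multiset.single_le_sum
      · intro y hy; obtain ⟨σ, _, rfl⟩ := Multiset.mem_map.mp hy; exact norm_nonneg σ
      · exact Multiset.mem_map_of_mem _ hρ
    have := norm_sub_norm_le z ρ
    simp only [Function.comp_apply]
    calc (1:ℝ) = R₀ - ((s.map (fun x => ‖x‖)).sum) := by rw [hR₀]; ring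
    _ ≤ ‖z‖ - ‖ρ‖ := by linarith
    _ ≤ ‖z - ρ‖ := norm_sub_norm_le z ρ
  obtain ⟨K, hK⟩ := (isCompact_closedBall (0:ℂ) R₀).exists_bound_of_continuousOn
    hgd.continuous.continuousOn
  set C₁ : ℝ := max C K + 1 with hC₁
  have hC₁1 : 1 ≤ C₁ := by
    have : (0:ℝ) ≤ max C K := le_trans hC (le_max_left _ _)
    rw [hC₁]; linarith
  have hgb : ∀ z : ℂ, ‖g z‖ ≤ C₁ * Real.exp (τ * ‖z‖) := by
    intro z
    have hexp1 : 1 ≤ Real.exp (τ * ‖z‖) := Real.one_le_exp (by positivity)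
    rcases le_or_gt ‖z‖ R₀ with hle | hlt
    · have := hK z (by simpa using hle)
      calc ‖g z‖ ≤ K := this
      _ ≤ C₁ := by rw [hC₁]; nlinarith [le_max_right C K]
      _ ≤ C₁ * Real.exp (τ * ‖z‖) := by nlinarith
    · have h1 := hprod_ge z hlt.le
      have h2 : ‖g z‖ ≤ ‖(s.map (fun ρ => z - ρ)).prod‖ * ‖g z‖ := by
        nlinarith [norm_nonneg (g z)]
      calc ‖g z‖ ≤ ‖(s.map (fun ρ => z - ρ)).prod‖ * ‖g z‖ := h2
      _ = ‖h z‖ := by rw [← norm_mul, ← hfac z]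
      _ ≤ C * Real.exp (τ * ‖z‖) := hb z
      _ ≤ C₁ * Real.exp (τ * ‖z‖) := by
          have : C ≤ C₁ := by rw [hC₁]; nlinarith [le_max_left C K]
          nlinarith
  have hC₁pos : (0:ℝ) < C₁ := lt_of_lt_of_le one_pos hC₁1
  have hre : ∀ z : ℂ, (f z).re ≤ Real.log C₁ + τ * ‖z‖ := by
    intro z
    have h1 : Real.exp ((f z).re) = ‖g z‖ := by
      rw [hgf z, Complex.norm_exp]
    have h2 : Real.exp ((f z).re) ≤ C₁ * Real.exp (τ * ‖z‖) := h1 ▸ hgb z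
    have h3 := Real.log_le_log (Real.exp_pos _) h2
    rwa [Real.log_exp, Real.log_mul (ne_of_gt hC₁pos) (ne_of_gt (Real.exp_pos _)),
      Real.log_exp] at h3
  have haffine := entire_affine_of_re_le hfd hτ hre
  refine ⟨Complex.exp (f 0) • (s.map (fun ρ => Polynomial.X - Polynomial.C ρ)).prod,
    deriv f 0, ?_⟩
  intro z
  rw [hfac z, hgf z, haffine z]
  rw [Polynomial.eval_smul, Polynomial.eval_multiset_prod, Multiset.map_map]
  have hmap : (s.map ((fun p => Polynomial.eval z p) ∘ fun ρ => Polynomial.X - Polynomial.C ρ))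
      = s.map (fun ρ => z - ρ) := by
    apply Multiset.map_congr rfl
    intro ρ _
    simp
  rw [hmap, Complex.exp_add, smul_eq_mul]
  ring
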